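/- The Foster graph admits no coherent 10-cycle orientation of level 5; that is, there is no choice, for each 10-cycle of the Foster graph, of one of its two directions such that every path v_0, v_1, v_2, v_3, v_4 on 5 distinct vertices with consecutive vertices adjacent occurs as a consecutive segment of exactly one chosen directed 10-cycle. -/
import Mathlib


/-- A directed `g`-cycle of a simple graph `G`: an injective map `c : ZMod g → V`
with `c i` adjacent to `c (i+1)` for all `i`. -/
def IsDirCycleOn {V : Type*} (G : SimpleGraph V) (g : ℕ) (c : ZMod g → V) : Prop :=
  Function.Injective c ∧ ∀ i : ZMod g, G.Adj (c i) (c (i + 1))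

/-- A sequence of `k` distinct vertices with consecutive vertices adjacent. -/
def IsPathSeq {V : Type*} (G : SimpleGraph V) (k : ℕ) (v : Fin k → V) : Prop :=
  Function.Injective v ∧ ∀ (j : ℕ) (h : j + 1 < k),
    G.Adj (v ⟨j, Nat.lt_of_succ_lt h⟩) (v ⟨j + 1, h⟩)

/-- A coherent `g`-cycle orientation of level `k` of `G`: a set `D` of directed
`g`-cycles of `G` containing, for every `g`-cycle of `G`, exactly one of its two
directions (one representative up to rotation), and such that every sequence of `k`
distinct vertices `v 0, …, v (k-1)` with consecutive vertices adjacent occurs as a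
consecutive segment `(c i, c (i+1), …, c (i+k-1))` of exactly one `c ∈ D`. -/
def IsCoherentOrientation {V : Type*} (G : SimpleGraph V) (g k : ℕ)
    (D : Set (ZMod g → V)) : Prop :=
  (∀ c ∈ D, IsDirCycleOn G g c) ∧
  (∀ c : ZMod g → V, IsDirCycleOn G g c →
    ∃! c', c' ∈ D ∧
      ((∃ r : ZMod g, ∀ i, c' i = c (i + r)) ∨ (∃ r : ZMod g, ∀ i, c' i = c (r - i)))) ∧
  (∀ v : Fin k → V, IsPathSeq G k v →
    ∃! c, c ∈ D ∧ ∃ i : ZMod g, ∀ j : Fin k, c (i + ((j : ℕ) : ZMod g)) = v j)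

/-- The Foster graph: vertex set `ZMod 90`, `i` adjacent to `i+1`, together with the
extra edges `{6x+4, 6x+13}`, `{6x, 6x+17}`, `{6x+2, 6x+39}` for every `x`. -/
def fosterGraph : SimpleGraph (ZMod 90) :=
  SimpleGraph.fromRel (fun i j =>
    j = i + 1 ∨ ∃ x : ZMod 90,
      (i = 6 * x + 4 ∧ j = 6 * x + 13) ∨ (i = 6 * x ∧ j = 6 * x + 17) ∨
      (i = 6 * x + 2 ∧ j = 6 * x + 39))

instance : DecidableRel fosterGraph.Adj := fun a b =>
  inferInstanceAs (Decidable (a ≠ b ∧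
    ((b = a + 1 ∨ ∃ x : ZMod 90,
      (a = 6 * x + 4 ∧ b = 6 * x + 13) ∨ (a = 6 * x ∧ b = 6 * x + 17) ∨
      (a = 6 * x + 2 ∧ b = 6 * x + 39)) ∨
     (a = b + 1 ∨ ∃ x : ZMod 90,
      (b = 6 * x + 4 ∧ a = 6 * x + 13) ∨ (b = 6 * x ∧ a = 6 * x + 17) ∨
      (b = 6 * x + 2 ∧ a = 6 * x + 39)))))

/- Four particular 10-cycles of the Foster graph. -/
def cycA : ZMod 10 → ZMod 90 := ![0,1,2,3,4,5,6,7,88,89]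
def cycB : ZMod 10 → ZMod 90 := ![2,3,4,5,6,23,24,41,40,39]
def cycC : ZMod 10 → ZMod 90 := ![0,1,2,39,40,41,24,25,16,17]
def cycD : ZMod 10 → ZMod 90 := ![0,1,2,3,4,13,14,15,16,17]

/- Eight particular 5-paths (four and their reversals). -/
def pth1 : Fin 5 → ZMod 90 := ![2,3,4,5,6]
def pth1r : Fin 5 → ZMod 90 := ![6,5,4,3,2]
def pth2 : Fin 5 → ZMod 90 := ![2,39,40,41,24]
def pth2r : Fin 5 → ZMod 90 := ![24,41,40,39,2]
def pth3 : Fin 5 → ZMod 90 := ![2,1,0,17,16]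
def pth3r : Fin 5 → ZMod 90 := ![16,17,0,1,2]
def pth4 : Fin 5 → ZMod 90 := ![0,1,2,3,4]
def pth4r : Fin 5 → ZMod 90 := ![4,3,2,1,0]

lemma isPathSeq_of {v : Fin 5 → ZMod 90} (h1 : Function.Injective v)
    (h2 : fosterGraph.Adj (v 0) (v 1) ∧ fosterGraph.Adj (v 1) (v 2) ∧
      fosterGraph.Adj (v 2) (v 3) ∧ fosterGraph.Adj (v 3) (v 4)) :
    IsPathSeq fosterGraph 5 v := by
  refine ⟨h1, ?_⟩
  intro j h
  have hj : j < 4 := by omega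
  interval_cases j
  · exact h2.1
  · exact h2.2.1
  · exact h2.2.2.1
  · exact h2.2.2.2

/-- A rotation of `c0` contains forward any path that `c0` contains forward. -/
lemma rot_contains {e c0 : ZMod 10 → ZMod 90} {P : Fin 5 → ZMod 90} {r : ZMod 10}
    (p : ZMod 10) (he : ∀ i, e i = c0 (i + r))
    (hc : ∀ j : Fin 5, c0 (p + ((j : ℕ) : ZMod 10)) = P j) :
    ∃ i : ZMod 10, ∀ j : Fin 5, e (i + ((j : ℕ) : ZMod 10)) = P j :=
  ⟨p - r, fun j => (he _).trans (by
    rw [show p - r + ((j : ℕ) : ZMod 10) + r = p + ((j : ℕ) : ZMod 10) by ring]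
    exact hc j)⟩

/-- A reflection of `c0` contains forward any path that `c0` contains backward. -/
lemma refl_contains {e c0 : ZMod 10 → ZMod 90} {P : Fin 5 → ZMod 90} {r : ZMod 10}
    (p : ZMod 10) (he : ∀ i, e i = c0 (r - i))
    (hc : ∀ j : Fin 5, c0 (p - ((j : ℕ) : ZMod 10)) = P j) :
    ∃ i : ZMod 10, ∀ j : Fin 5, e (i + ((j : ℕ) : ZMod 10)) = P j :=
  ⟨r - p, fun j => (he _).trans (by
    rw [show r - (r - p + ((j : ℕ) : ZMod 10)) = p - ((j : ℕ) : ZMod 10) by ring]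
    exact hc j)⟩

/-- Two cycle-representatives whose underlying vertex sets differ are distinct. -/
lemma neq_of {a b cX cY : ZMod 10 → ZMod 90}
    (hA : (∃ r : ZMod 10, ∀ i, a i = cX (i + r)) ∨ (∃ r : ZMod 10, ∀ i, a i = cX (r - i)))
    (hB : (∃ r : ZMod 10, ∀ i, b i = cY (i + r)) ∨ (∃ r : ZMod 10, ∀ i, b i = cY (r - i)))
    (i0 : ZMod 10) (h : ∀ t : ZMod 10, cY t ≠ cX i0) : a ≠ b := by
  intro hEq
  have hx : ∃ i, a i = cX i0 := by
    rcases hA with ⟨r, ha⟩ | ⟨r, ha⟩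
    · exact ⟨i0 - r, (ha _).trans (congrArg cX (by ring))⟩
    · exact ⟨r - i0, (ha _).trans (congrArg cX (by ring))⟩
  obtain ⟨i, hi⟩ := hx
  rw [hEq] at hi
  rcases hB with ⟨r, hb⟩ | ⟨r, hb⟩
  · exact h _ ((hb i).symm.trans hi)
  · exact h _ ((hb i).symm.trans hi)

/-- Two distinct elements of `D` cannot both contain the same 5-path forward. -/
lemma kill {D : Set (ZMod 10 → ZMod 90)}
    (h3 : ∀ v : Fin 5 → ZMod 90, IsPathSeq fosterGraph 5 v →
      ∃! c, c ∈ D ∧ ∃ i : ZMod 10, ∀ j : Fin 5, c (i + ((j : ℕ) : ZMod 10)) = v j)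
    {a b : ZMod 10 → ZMod 90} {P : Fin 5 → ZMod 90} (hP : IsPathSeq fosterGraph 5 P)
    (haD : a ∈ D) (hbD : b ∈ D)
    (ha : ∃ i : ZMod 10, ∀ j : Fin 5, a (i + ((j : ℕ) : ZMod 10)) = P j)
    (hb : ∃ i : ZMod 10, ∀ j : Fin 5, b (i + ((j : ℕ) : ZMod 10)) = P j)
    (hne : a ≠ b) : False := by
  obtain ⟨e, -, hu⟩ := h3 P hP
  exact hne ((hu a ⟨haD, ha⟩).trans (hu b ⟨hbD, hb⟩).symm)

/-- The Foster graph admits no coherent 10-cycle orientation of level 5. -/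
theorem foster_no_coherent_orientation :
    ¬ ∃ D : Set (ZMod 10 → ZMod 90), IsCoherentOrientation fosterGraph 10 5 D := by
  rintro ⟨D, -, h2, h3⟩
  -- the four cycles are genuine directed cycles
  have hcycA : IsDirCycleOn fosterGraph 10 cycA := ⟨by decide, by decide⟩
  have hcycB : IsDirCycleOn fosterGraph 10 cycB := ⟨by decide, by decide⟩
  have hcycC : IsDirCycleOn fosterGraph 10 cycC := ⟨by decide, by decide⟩
  have hcycD : IsDirCycleOn fosterGraph 10 cycD := ⟨by decide, by decide⟩
  -- representatives in D
  obtain ⟨a, ⟨haD, haE⟩, -⟩ := h2 cycA hcycA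
  obtain ⟨b, ⟨hbD, hbE⟩, -⟩ := h2 cycB hcycB
  obtain ⟨c, ⟨hcD, hcE⟩, -⟩ := h2 cycC hcycC
  obtain ⟨d, ⟨hdD, hdE⟩, -⟩ := h2 cycD hcycD
  -- the eight 5-paths are genuine path sequences
  have hP1 : IsPathSeq fosterGraph 5 pth1 := isPathSeq_of (by decide) (by decide)
  have hP1r : IsPathSeq fosterGraph 5 pth1r := isPathSeq_of (by decide) (by decide)
  have hP2 : IsPathSeq fosterGraph 5 pth2 := isPathSeq_of (by decide) (by decide)
  have hP2r : IsPathSeq fosterGraph 5 pth2r := isPathSeq_of (by decide) (by decide)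
  have hP3 : IsPathSeq fosterGraph 5 pth3 := isPathSeq_of (by decide) (by decide)
  have hP3r : IsPathSeq fosterGraph 5 pth3r := isPathSeq_of (by decide) (by decide)
  have hP4 : IsPathSeq fosterGraph 5 pth4 := isPathSeq_of (by decide) (by decide)
  have hP4r : IsPathSeq fosterGraph 5 pth4r := isPathSeq_of (by decide) (by decide)
  -- distinctness of representatives
  have nAB : a ≠ b := neq_of haE hbE 8 (by decide)
  have nBC : b ≠ c := neq_of hbE hcE 1 (by decide)
  have nCD : c ≠ d := neq_of hcE hdE 3 (by decide)
  have nAD : a ≠ d := neq_of haE hdE 8 (by decide)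
  -- containment facts
  have fA1 : ∀ j : Fin 5, cycA (2 + ((j : ℕ) : ZMod 10)) = pth1 j := by decide
  have fB1 : ∀ j : Fin 5, cycB (0 + ((j : ℕ) : ZMod 10)) = pth1 j := by decide
  have fA1r : ∀ j : Fin 5, cycA (6 - ((j : ℕ) : ZMod 10)) = pth1r j := by decide
  have fB1r : ∀ j : Fin 5, cycB (4 - ((j : ℕ) : ZMod 10)) = pth1r j := by decide
  have fB2 : ∀ j : Fin 5, cycB (0 - ((j : ℕ) : ZMod 10)) = pth2 j := by decide
  have fC2 : ∀ j : Fin 5, cycC (2 + ((j : ℕ) : ZMod 10)) = pth2 j := by decide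
  have fB2r : ∀ j : Fin 5, cycB (6 + ((j : ℕ) : ZMod 10)) = pth2r j := by decide
  have fC2r : ∀ j : Fin 5, cycC (6 - ((j : ℕ) : ZMod 10)) = pth2r j := by decide
  have fC3 : ∀ j : Fin 5, cycC (2 - ((j : ℕ) : ZMod 10)) = pth3 j := by decide
  have fD3 : ∀ j : Fin 5, cycD (2 - ((j : ℕ) : ZMod 10)) = pth3 j := by decide
  have fC3r : ∀ j : Fin 5, cycC (8 + ((j : ℕ) : ZMod 10)) = pth3r j := by decide
  have fD3r : ∀ j : Fin 5, cycD (8 + ((j : ℕ) : ZMod 10)) = pth3r j := by decide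
  have fA4 : ∀ j : Fin 5, cycA (0 + ((j : ℕ) : ZMod 10)) = pth4 j := by decide
  have fD4 : ∀ j : Fin 5, cycD (0 + ((j : ℕ) : ZMod 10)) = pth4 j := by decide
  have fA4r : ∀ j : Fin 5, cycA (4 - ((j : ℕ) : ZMod 10)) = pth4r j := by decide
  have fD4r : ∀ j : Fin 5, cycD (4 - ((j : ℕ) : ZMod 10)) = pth4r j := by decide
  rcases haE with ⟨ra, ha⟩ | ⟨ra, ha⟩ <;>
    rcases hbE with ⟨rb, hb⟩ | ⟨rb, hb⟩ <;>
    rcases hcE with ⟨rc, hc⟩ | ⟨rc, hc⟩ <;>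
    rcases hdE with ⟨rd, hd⟩ | ⟨rd, hd⟩ <;>
    first
    | exact kill h3 hP1 haD hbD (rot_contains 2 ha fA1) (rot_contains 0 hb fB1) nAB
    | exact kill h3 hP1r haD hbD (refl_contains 6 ha fA1r) (refl_contains 4 hb fB1r) nAB
    | exact kill h3 hP2 hbD hcD (refl_contains 0 hb fB2) (rot_contains 2 hc fC2) nBC
    | exact kill h3 hP2r hbD hcD (rot_contains 6 hb fB2r) (refl_contains 6 hc fC2r) nBC
    | exact kill h3 hP3 hcD hdD (refl_contains 2 hc fC3) (refl_contains 2 hd fD3) nCD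
    | exact kill h3 hP3r hcD hdD (rot_contains 8 hc fC3r) (rot_contains 8 hd fD3r) nCD
    | exact kill h3 hP4 haD hdD (rot_contains 0 ha fA4) (rot_contains 0 hd fD4) nAD
    | exact kill h3 hP4r haD hdD (refl_contains 4 ha fA4r) (refl_contains 4 hd fD4r) nAD
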